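/- There exists a uniquely geodesic metric space M₀ such that for every positive integer n, μ_n(M₀) = n² − 2n + 2. (Such a space is obtained by endowing the complex plane with the metric d(z,w) = |z − w| if w = 0, or if w ≠ 0 and z/w is real, and d(z,w) = |z| + |w| otherwise.) -/

import Mathlib

/-- `(a,b,c)` is a 3-term arithmetic progression in the metric space `M`:
`d(a,b) = d(b,c) = (1/2)·d(a,c)`. -/
def IsAP3 {M : Type*} [MetricSpace M] (a b c : M) : Prop :=
  dist a b = dist b c ∧ dist b c = dist a c / 2

/-- The set of 3-term arithmetic progressions with all entries in `A`. -/
def AT {M : Type*} [MetricSpace M] (A : Set M) : Set (M × M × M) :=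
  {p | p.1 ∈ A ∧ p.2.1 ∈ A ∧ p.2.2 ∈ A ∧ IsAP3 p.1 p.2.1 p.2.2}

/-- `γ : ℝ → M` (restricted to `[0, dist p q]`) is a geodesic from `p` to `q`. -/
def IsGeodesicMap {M : Type*} [MetricSpace M] (p q : M) (γ : ℝ → M) : Prop :=
  γ 0 = p ∧ γ (dist p q) = q ∧
  ∀ s ∈ Set.Icc (0 : ℝ) (dist p q), ∀ t ∈ Set.Icc (0 : ℝ) (dist p q),
    dist (γ s) (γ t) = |s - t|

/-- `M` is uniquely geodesic. -/
def UniquelyGeodesic (M : Type*) [MetricSpace M] : Prop :=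
  ∀ p q : M, p ≠ q →
    (∃ γ : ℝ → M, IsGeodesicMap p q γ) ∧
    ∀ γ₁ γ₂ : ℝ → M, IsGeodesicMap p q γ₁ → IsGeodesicMap p q γ₂ →
      ∀ t ∈ Set.Icc (0 : ℝ) (dist p q), γ₁ t = γ₂ t

/-- The hedgehog space: branches indexed by ℕ, glued at the origin. -/
def Hedgehog : Type := {p : ℕ × ℝ // 0 ≤ p.2 ∧ (p.2 = 0 → p.1 = 0)}

namespace Hedgehog

def hdist (x y : Hedgehog) : ℝ :=
  if x.1.1 = y.1.1 then |x.1.2 - y.1.2| else x.1.2 + y.1.2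

noncomputable instance : MetricSpace Hedgehog where
  dist := hdist
  dist_self x := by simp [hdist]
  dist_comm x y := by
    show hdist x y = hdist y x
    unfold hdist
    rcases eq_or_ne x.1.1 y.1.1 with h | h
    · rw [if_pos h, if_pos h.symm, abs_sub_comm]
    · rw [if_neg h, if_neg (Ne.symm h)]; ring
  dist_triangle x y z := by
    show hdist x z ≤ hdist x y + hdist y z
    obtain ⟨⟨i, s⟩, hs, hs0⟩ := x
    obtain ⟨⟨j, t⟩, ht, ht0⟩ := y
    obtain ⟨⟨k, u⟩, hu, hu0⟩ := z
    have hs' : (0:ℝ) ≤ s := hs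
    have ht' : (0:ℝ) ≤ t := ht
    have hu' : (0:ℝ) ≤ u := hu
    unfold hdist
    simp only
    split_ifs <;> try omega
    all_goals
      cases abs_cases (s - t) <;> cases abs_cases (t - u) <;>
        cases abs_cases (s - u) <;> linarith
  eq_of_dist_eq_zero := by
    intro x y h
    obtain ⟨⟨i, s⟩, hs, hs0⟩ := x
    obtain ⟨⟨j, t⟩, ht, ht0⟩ := y
    have hs' : (0:ℝ) ≤ s := hs
    have ht' : (0:ℝ) ≤ t := ht
    replace h : hdist ⟨(i, s), hs, hs0⟩ ⟨(j, t), ht, ht0⟩ = 0 := h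
    unfold hdist at h
    simp only at h
    split_ifs at h with hij
    · have : s = t := by cases abs_cases (s - t) <;> linarith
      subst this; subst hij; rfl
    · have h1 : s = 0 := by linarith
      have h2 : t = 0 := by linarith
      exact absurd ((hs0 h1).trans (ht0 h2).symm) hij

lemma dist_def (x y : Hedgehog) :
    dist x y = if x.1.1 = y.1.1 then |x.1.2 - y.1.2| else x.1.2 + y.1.2 := rfl

lemma dist_def' (x y : {p : ℕ × ℝ // 0 ≤ p.2 ∧ (p.2 = 0 → p.1 = 0)}) :
    @dist Hedgehog _ x y = if x.1.1 = y.1.1 then |x.1.2 - y.1.2| else x.1.2 + y.1.2 := rfl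

/-- Origin of the hedgehog. -/
def o : Hedgehog := ⟨(0, 0), le_refl 0, fun _ => rfl⟩

/-- A point on branch `i` at distance `x` from the origin (origin if `x ≤ 0`). -/
noncomputable def mk (i : ℕ) (x : ℝ) : Hedgehog :=
  if h : 0 < x then ⟨(i, x), le_of_lt h, fun h0 => absurd h0 (ne_of_gt h)⟩ else o

@[simp] lemma mk_nonpos (i : ℕ) {x : ℝ} (h : x ≤ 0) : mk i x = o := by
  simp [mk, not_lt.mpr h]

@[simp] lemma mk_zero (i : ℕ) : mk i 0 = o := mk_nonpos i le_rfl

lemma mk_pos (i : ℕ) {x : ℝ} (h : 0 < x) :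
    mk i x = ⟨(i, x), le_of_lt h, fun h0 => absurd h0 (ne_of_gt h)⟩ := by
  simp [mk, h]
  rfl

lemma mk_eta (p : Hedgehog) : mk p.1.1 p.1.2 = p := by
  obtain ⟨⟨i, s⟩, hs, hs0⟩ := p
  rcases lt_or_eq_of_le hs with h | h
  · simp only
    rw [mk_pos i h]
  · have h0 : s = 0 := h.symm
    have hi : i = 0 := hs0 h0
    subst h0; subst hi
    simp only
    rw [mk_zero]
    rfl

lemma dist_mk (i j : ℕ) {x y : ℝ} (hx : 0 ≤ x) (hy : 0 ≤ y) :
    dist (mk i x) (mk j y) = if i = j then |x - y| else x + y := by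
  rcases hx.lt_or_eq with hx' | hx' <;> rcases hy.lt_or_eq with hy' | hy'
  · rw [mk_pos i hx', mk_pos j hy', dist_def']
  · rw [← hy', mk_zero, mk_pos i hx']
    show (if i = 0 then |x - 0| else x + 0) = _
    split_ifs <;> simp [abs_of_pos hx']
  · rw [← hx', mk_zero, mk_pos j hy']
    show (if 0 = j then |0 - y| else 0 + y) = _
    split_ifs <;> simp [abs_of_pos hy'] <;> ring
  · rw [← hx', ← hy', mk_zero, mk_zero, dist_self]
    split_ifs <;> simp

end Hedgehog

namespace Hedgehog

lemma eq_o {k : ℕ} {u : ℝ} {hp : 0 ≤ (k, u).2 ∧ ((k, u).2 = 0 → (k, u).1 = 0)}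
    (h : u = 0) : (⟨(k, u), hp⟩ : Hedgehog) = o := by
  subst h
  have hk : k = 0 := hp.2 rfl
  subst hk
  rfl

/-- The canonical geodesic from `p` to `q`. -/
noncomputable def geod (p q : Hedgehog) (r : ℝ) : Hedgehog :=
  if p.1.1 = q.1.1 then
    (if p.1.2 ≤ q.1.2 then mk p.1.1 (p.1.2 + r) else mk p.1.1 (p.1.2 - r))
  else (if r ≤ p.1.2 then mk p.1.1 (p.1.2 - r) else mk q.1.1 (r - p.1.2))

/-- Any point metrically between `p` and `q` lies on the canonical geodesic. -/
theorem eq_geod (p q x : Hedgehog) (h : dist p x + dist x q = dist p q) :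
    x = geod p q (dist p x) := by
  obtain ⟨⟨i, s⟩, hs, hs0⟩ := p
  obtain ⟨⟨j, t⟩, ht, ht0⟩ := q
  obtain ⟨⟨k, u⟩, hu, hu0⟩ := x
  have hs' : (0:ℝ) ≤ s := hs
  have ht' : (0:ℝ) ≤ t := ht
  have hu' : (0:ℝ) ≤ u := hu
  have hs0' : s = 0 → i = 0 := hs0
  have hu0' : u = 0 → k = 0 := hu0
  simp only [dist_def', geod] at h ⊢
  by_cases hij : i = j
  · rw [if_pos hij] at h ⊢
    by_cases hik : i = k
    · subst hik
      have hkj : i = j := hij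
      rw [if_pos rfl] at h ⊢
      rw [if_pos hij] at h
      by_cases hst : s ≤ t
      · rw [if_pos hst]
        have h1 : s ≤ u ∧ u ≤ t := by
          cases abs_cases (s-u) <;> cases abs_cases (u-t) <;> cases abs_cases (s-t) <;>
            constructor <;> linarith
        rw [abs_of_nonpos (by linarith : s - u ≤ 0)]
        rw [show s + -(s - u) = u by ring]
        exact (mk_eta _).symm
      · rw [if_neg hst]
        have h1 : t ≤ u ∧ u ≤ s := by
          cases abs_cases (s-u) <;> cases abs_cases (u-t) <;> cases abs_cases (s-t) <;>
            constructor <;> linarith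
        rw [abs_of_nonneg (by linarith : 0 ≤ s - u)]
        rw [show s - (s - u) = u by ring]
        exact (mk_eta _).symm
    · have hkj : ¬ k = j := fun hh => hik (hij.trans hh.symm)
      rw [if_neg hik] at h ⊢
      rw [if_neg hkj] at h
      have hu0'' : u = 0 := by
        cases abs_cases (s-t) <;> linarith
      have hk0 : k = 0 := hu0' hu0''
      by_cases hst : s ≤ t
      · exfalso
        have hs'' : s = 0 := by cases abs_cases (s-t) <;> linarith
        exact hik ((hs0' hs'').trans hk0.symm)
      · rw [if_neg hst]
        have ht'' : t = 0 := by cases abs_cases (s-t) <;> linarith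
        rw [eq_o hu0'']
        rw [show s - (s + u) = -u by ring]
        rw [mk_nonpos _ (by linarith)]
  · rw [if_neg hij] at h ⊢
    by_cases hik : i = k
    · subst hik
      rw [if_pos rfl] at h ⊢
      rw [if_neg hij] at h
      have habs : |s - u| = s - u := by cases abs_cases (s-u) <;> linarith
      rw [habs]
      rw [if_pos (by linarith : s - u ≤ s)]
      rw [show s - (s - u) = u by ring]
      exact (mk_eta _).symm
    · rw [if_neg hik] at h ⊢
      by_cases hkj : k = j
      · subst hkj
        rw [if_pos rfl] at h
        have hut : |u - t| = t - u := by cases abs_cases (u-t) <;> linarith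
        by_cases hr : s + u ≤ s
        · rw [if_pos hr]
          have hu0'' : u = 0 := le_antisymm (by linarith) hu'
          rw [eq_o hu0'']
          rw [show s - (s + u) = -u by ring, mk_nonpos _ (by linarith)]
        · rw [if_neg hr]
          rw [show s + u - s = u by ring]
          exact (mk_eta _).symm
      · rw [if_neg hkj] at h
        have hu0'' : u = 0 := by linarith
        rw [if_pos (by linarith : s + u ≤ s)]
        rw [eq_o hu0'']
        rw [show s - (s + u) = -u by ring, mk_nonpos _ (by linarith)]

end Hedgehog

namespace Hedgehog

lemma geod_zero (p q : Hedgehog) : geod p q 0 = p := by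
  have hs' : (0:ℝ) ≤ p.1.2 := p.2.1
  unfold geod
  split_ifs with h1 h2 h3 <;>
    first
      | (rw [add_zero]; exact mk_eta p)
      | (rw [sub_zero]; exact mk_eta p)
      | exact absurd hs' h3

lemma geod_end (p q : Hedgehog) : geod p q (dist p q) = q := by
  obtain ⟨⟨i, s⟩, hs, hs0⟩ := p
  obtain ⟨⟨j, t⟩, ht, ht0⟩ := q
  have hs' : (0:ℝ) ≤ s := hs
  have ht' : (0:ℝ) ≤ t := ht
  have ht0' : t = 0 → j = 0 := ht0
  simp only [dist_def', geod]
  by_cases hij : i = j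
  · subst hij
    rw [if_pos rfl, if_pos rfl]
    by_cases hst : s ≤ t
    · rw [if_pos hst, abs_of_nonpos (by linarith : s - t ≤ 0),
        show s + -(s - t) = t by ring]
      exact mk_eta ⟨(i, t), ht, ht0⟩
    · rw [if_neg hst, abs_of_nonneg (by linarith : 0 ≤ s - t),
        show s - (s - t) = t by ring]
      exact mk_eta ⟨(i, t), ht, ht0⟩
  · rw [if_neg hij, if_neg hij]
    by_cases hr : s + t ≤ s
    · rw [if_pos hr]
      have ht'' : t = 0 := le_antisymm (by linarith) ht'
      rw [show s - (s + t) = -t by ring, mk_nonpos _ (by linarith)]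
      exact (eq_o ht'').symm
    · rw [if_neg hr, show s + t - s = t by ring]
      exact mk_eta ⟨(j, t), ht, ht0⟩

lemma geod_dist (p q : Hedgehog) :
    ∀ r ∈ Set.Icc (0:ℝ) (dist p q), ∀ r' ∈ Set.Icc (0:ℝ) (dist p q),
      dist (geod p q r) (geod p q r') = |r - r'| := by
  obtain ⟨⟨i, s⟩, hs, hs0⟩ := p
  obtain ⟨⟨j, t⟩, ht, ht0⟩ := q
  have hs' : (0:ℝ) ≤ s := hs
  have ht' : (0:ℝ) ≤ t := ht
  intro r hr r' hr'
  simp only [dist_def'] at hr hr'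
  simp only [geod]
  try dsimp only at hr hr' ⊢
  by_cases hij : i = j
  · subst hij
    rw [if_pos rfl] at hr hr' ⊢
    rw [if_pos rfl]
    obtain ⟨hr0, hrd⟩ := hr
    obtain ⟨hr0', hrd'⟩ := hr'
    by_cases hst : s ≤ t
    · rw [if_pos hst, if_pos hst]
      have h1 : |s - t| = t - s := by
        rw [abs_of_nonpos (by linarith : s - t ≤ 0)]; ring
      rw [h1] at hrd hrd'
      rw [dist_mk i i (by linarith) (by linarith), if_pos rfl,
        show s + r - (s + r') = r - r' by ring]
    · rw [if_neg hst, if_neg hst]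
      have h1 : |s - t| = s - t := abs_of_nonneg (by linarith)
      rw [h1] at hrd hrd'
      rw [dist_mk i i (by linarith) (by linarith), if_pos rfl,
        show s - r - (s - r') = -(r - r') by ring, abs_neg]
  · rw [if_neg hij] at hr hr' ⊢
    rw [if_neg hij]
    obtain ⟨hr0, hrd⟩ := hr
    obtain ⟨hr0', hrd'⟩ := hr'
    by_cases h1 : r ≤ s <;> by_cases h2 : r' ≤ s
    · rw [if_pos h1, if_pos h2, dist_mk i i (by linarith) (by linarith), if_pos rfl,
        show s - r - (s - r') = -(r - r') by ring, abs_neg]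
    · rw [if_pos h1, if_neg h2, dist_mk i j (by linarith) (by linarith), if_neg hij,
        show s - r + (r' - s) = r' - r by ring, abs_of_nonpos (by linarith : r - r' ≤ 0)]
      ring
    · rw [if_neg h1, if_pos h2, dist_mk j i (by linarith) (by linarith),
        if_neg (fun hh => hij hh.symm)]
      rw [show r - s + (s - r') = r - r' by ring, abs_of_nonneg (by linarith : 0 ≤ r - r')]
    · rw [if_neg h1, if_neg h2, dist_mk j j (by linarith) (by linarith), if_pos rfl,
        show r - s - (r' - s) = r - r' by ring]

/-- The hedgehog is uniquely geodesic. -/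
theorem uniquely_geodesic : UniquelyGeodesic Hedgehog := by
  intro p q _
  constructor
  · exact ⟨geod p q, geod_zero p q, geod_end p q,
      fun s hs t ht => geod_dist p q s hs t ht⟩
  · intro γ₁ γ₂ h₁ h₂ t ht
    have key : ∀ γ : ℝ → Hedgehog, IsGeodesicMap p q γ → γ t = geod p q t := by
      intro γ hγ
      obtain ⟨hz, he, hd⟩ := hγ
      have h0m : (0:ℝ) ∈ Set.Icc 0 (dist p q) := ⟨le_rfl, dist_nonneg⟩
      have hDm : dist p q ∈ Set.Icc (0:ℝ) (dist p q) := ⟨dist_nonneg, le_rfl⟩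
      have d1 : dist p (γ t) = t := by
        have h := hd 0 h0m t ht
        rw [hz] at h
        rw [h, abs_of_nonpos (by linarith [ht.1] : (0:ℝ) - t ≤ 0)]
        ring
      have d2 : dist (γ t) q = dist p q - t := by
        have h := hd t ht (dist p q) hDm
        rw [he] at h
        rw [h, abs_of_nonpos (by linarith [ht.2] : t - dist p q ≤ 0)]
        ring
      have hsum : dist p (γ t) + dist (γ t) q = dist p q := by
        rw [d1, d2]; ring
      have := eq_geod p q (γ t) hsum
      rwa [d1] at this
    rw [key γ₁ h₁, key γ₂ h₂]

/-- Midpoints are unique in the hedgehog. -/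
theorem mid_unique {a b b' c : Hedgehog} (h : IsAP3 a b c) (h' : IsAP3 a b' c) :
    b = b' := by
  obtain ⟨h1, h2⟩ := h
  obtain ⟨h1', h2'⟩ := h'
  have e1 : b = geod a c (dist a c / 2) := by
    have := eq_geod a c b (by rw [h1, h2]; ring)
    rwa [h1, h2] at this
  have e2 : b' = geod a c (dist a c / 2) := by
    have := eq_geod a c b' (by rw [h1', h2']; ring)
    rwa [h1', h2'] at this
  rw [e1, e2]

end Hedgehog

open Finset

/-- Key combinatorial lemma: if a symmetric relation crosses every cut of `s`,
then it has at least `2 * (s.card - 1)` ordered pairs. -/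
lemma cut_aux {α : Type*} [DecidableEq α] (s : Finset α) (R : α → α → Prop)
    [DecidableRel R] (hsymm : ∀ a b, R a b → R b a)
    (hcut : ∀ B : Finset α, B ⊆ s → B.Nonempty → B ≠ s →
      ∃ a ∈ B, ∃ c ∈ s, c ∉ B ∧ R a c) :
    ∀ (m : ℕ) (B : Finset α), B ⊆ s → B.Nonempty → s.card - B.card = m →
      2 * m ≤ ((s ×ˢ s).filter (fun p => (p.1 ∉ B ∨ p.2 ∉ B) ∧ R p.1 p.2)).card := by
  intro m
  induction m with
  | zero => intro B _ _ _; simp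
  | succ m ih =>
    intro B hBs hBne hm
    have hBlt : B.card ≤ s.card := card_le_card hBs
    have hBneq : B ≠ s := by
      intro h; subst h; omega
    obtain ⟨a, haB, c, hcs, hcB, hR⟩ := hcut B hBs hBne hBneq
    have hcardins : (insert c B).card = B.card + 1 := card_insert_of_notMem hcB
    have hlt : B.card < s.card := card_lt_card (ssubset_of_subset_of_ne hBs hBneq)
    have hcard : s.card - (insert c B).card = m := by omega
    have hsub : insert c B ⊆ s := insert_subset hcs hBs
    have h2 := ih (insert c B) hsub ⟨a, mem_insert_of_mem haB⟩ hcard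
    have hne : a ≠ c := fun h => hcB (h ▸ haB)
    have hac : (a, c) ∈ (s ×ˢ s).filter (fun p => (p.1 ∉ B ∨ p.2 ∉ B) ∧ R p.1 p.2) :=
      mem_filter.2 ⟨mem_product.2 ⟨hBs haB, hcs⟩, Or.inr hcB, hR⟩
    have hca : (c, a) ∈ (s ×ˢ s).filter (fun p => (p.1 ∉ B ∨ p.2 ∉ B) ∧ R p.1 p.2) :=
      mem_filter.2 ⟨mem_product.2 ⟨hcs, hBs haB⟩, Or.inl hcB, hsymm _ _ hR⟩
    have hacn : (a, c) ∉ (s ×ˢ s).filter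
        (fun p => (p.1 ∉ insert c B ∨ p.2 ∉ insert c B) ∧ R p.1 p.2) := by
      intro hmem
      rcases (mem_filter.1 hmem).2.1 with h | h
      · exact h (mem_insert_of_mem haB)
      · exact h (mem_insert_self c B)
    have hcan : (c, a) ∉ (s ×ˢ s).filter
        (fun p => (p.1 ∉ insert c B ∨ p.2 ∉ insert c B) ∧ R p.1 p.2) := by
      intro hmem
      rcases (mem_filter.1 hmem).2.1 with h | h
      · exact h (mem_insert_self c B)
      · exact h (mem_insert_of_mem haB)
    have hsub2 : insert (a, c) (insert (c, a) ((s ×ˢ s).filter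
        (fun p => (p.1 ∉ insert c B ∨ p.2 ∉ insert c B) ∧ R p.1 p.2))) ⊆
        (s ×ˢ s).filter (fun p => (p.1 ∉ B ∨ p.2 ∉ B) ∧ R p.1 p.2) := by
      intro p hp
      rcases mem_insert.1 hp with rfl | hp
      · exact hac
      rcases mem_insert.1 hp with rfl | hp
      · exact hca
      · obtain ⟨hps, hcond, hr⟩ := mem_filter.1 hp
        refine mem_filter.2 ⟨hps, ?_, hr⟩
        rcases hcond with h | h
        · exact Or.inl (fun hh => h (mem_insert_of_mem hh))
        · exact Or.inr (fun hh => h (mem_insert_of_mem hh))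
    have hcardins2 : (insert (a, c) (insert (c, a) ((s ×ˢ s).filter
        (fun p => (p.1 ∉ insert c B ∨ p.2 ∉ insert c B) ∧ R p.1 p.2)))).card =
        ((s ×ˢ s).filter
          (fun p => (p.1 ∉ insert c B ∨ p.2 ∉ insert c B) ∧ R p.1 p.2)).card + 2 := by
      rw [card_insert_of_notMem, card_insert_of_notMem hcan]
      intro hmem
      rcases mem_insert.1 hmem with h | h
      · exact hne (congrArg Prod.fst h)
      · exact hacn h
    have := card_le_card hsub2
    omega

lemma cut_card {α : Type*} [DecidableEq α] (s : Finset α) (R : α → α → Prop)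
    [DecidableRel R] (hs : s.Nonempty) (hsymm : ∀ a b, R a b → R b a)
    (hcut : ∀ B : Finset α, B ⊆ s → B.Nonempty → B ≠ s →
      ∃ a ∈ B, ∃ c ∈ s, c ∉ B ∧ R a c) :
    2 * (s.card - 1) ≤ ((s ×ˢ s).filter (fun p => R p.1 p.2)).card := by
  obtain ⟨a, ha⟩ := hs
  have h := cut_aux s R hsymm hcut (s.card - 1) {a}
    (by simpa using ha) ⟨a, mem_singleton_self a⟩ (by simp)
  refine h.trans (card_le_card ?_)
  intro p hp
  exact mem_filter.2 ⟨(mem_filter.1 hp).1, (mem_filter.1 hp).2.2⟩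

lemma IsAP3.symm' {M : Type*} [MetricSpace M] {a b c : M} (h : IsAP3 a b c) :
    IsAP3 c b a := by
  obtain ⟨h1, h2⟩ := h
  constructor
  · rw [dist_comm c b, dist_comm b a, ← h1]
  · rw [dist_comm b a, h1, h2, dist_comm a c]

/-- General upper bound for the number of 3-APs in a space with unique midpoints. -/
lemma AT_ncard_le {M : Type} [MetricSpace M]
    (hmid : ∀ a b b' c : M, IsAP3 a b c → IsAP3 a b' c → b = b')
    (A : Set M) (hA : A.Finite) :
    (AT A).ncard ≤ A.ncard ^ 2 + 2 - 2 * A.ncard := by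
  classical
  have hcard : A.ncard = hA.toFinset.card := Set.ncard_eq_toFinset_card A hA
  set s := hA.toFinset with hsdef
  set n := s.card with hn
  set T : Finset (M × M × M) := (s ×ˢ s ×ˢ s).filter (fun p => IsAP3 p.1 p.2.1 p.2.2)
    with hT
  have hAT : AT A = ↑T := by
    ext p
    simp only [AT, Set.mem_setOf_eq, hT, coe_filter, mem_product,
      Set.Finite.mem_toFinset, hsdef]
    tauto
  rw [hcard, hAT, Set.ncard_coe_finset]
  -- diagonal
  set D : Finset (M × M × M) := s.image (fun x => (x, x, x)) with hD
  have hinj : Function.Injective (fun x : M => (x, x, x)) :=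
    fun a b h => congrArg Prod.fst h
  have hDcard : D.card = n := by rw [hD, card_image_of_injective _ hinj]
  -- off-diagonal pairs
  set OD : Finset (M × M) := (s ×ˢ s).filter (fun q => q.1 ≠ q.2) with hOD
  have hODcard : OD.card = n * n - n := by
    have h : OD = s.offDiag := by
      ext q
      simp [hOD, Finset.mem_offDiag, mem_product, and_assoc]
    rw [h, Finset.offDiag_card]
  set Pf : Finset (M × M) := OD.filter (fun q => ∃ b ∈ s, IsAP3 q.1 b q.2) with hPf
  set Nf : Finset (M × M) := OD.filter (fun q => ¬ ∃ b ∈ s, IsAP3 q.1 b q.2) with hNf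
  have hPN : Pf.card + Nf.card = OD.card := by
    rw [hPf, hNf]
    exact Finset.card_filter_add_card_filter_not _
  -- T splits into the diagonal and nontrivial triples
  have hTsub : T ⊆ D ∪ T.filter (fun p => p.1 ≠ p.2.2) := by
    rintro ⟨a, b, c⟩ hp
    by_cases hp2 : a = c
    · subst hp2
      obtain ⟨hps, h1, h2⟩ := mem_filter.1 hp
      dsimp only at h1 h2
      rw [dist_self] at h2
      have hb : b = a := by
        have hz : dist b a = 0 := by rw [h2]; ring
        exact dist_eq_zero.1 hz
      subst hb
      exact mem_union_left _ (mem_image.2 ⟨b, (mem_product.1 hps).1, rfl⟩)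
    · exact mem_union_right _ (mem_filter.2 ⟨hp, hp2⟩)
  have hTD : T.card ≤ n + (T.filter (fun p => p.1 ≠ p.2.2)).card :=
    calc T.card ≤ (D ∪ T.filter (fun p => p.1 ≠ p.2.2)).card := card_le_card hTsub
    _ ≤ D.card + (T.filter (fun p => p.1 ≠ p.2.2)).card := card_union_le _ _
    _ = n + (T.filter (fun p => p.1 ≠ p.2.2)).card := by rw [hDcard]
  -- nontrivial triples inject into Pf
  have hTP : (T.filter (fun p => p.1 ≠ p.2.2)).card ≤ Pf.card := by
    apply Finset.card_le_card_of_injOn (fun p => (p.1, p.2.2))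
    · rintro ⟨a, b, c⟩ hp
      obtain ⟨hpT, hne⟩ := mem_filter.1 hp
      obtain ⟨hps, hap⟩ := mem_filter.1 hpT
      obtain ⟨h1, h23⟩ := mem_product.1 hps
      obtain ⟨h2, h3⟩ := mem_product.1 h23
      exact mem_filter.2 ⟨mem_filter.2 ⟨mem_product.2 ⟨h1, h3⟩, hne⟩, ⟨b, h2, hap⟩⟩
    · rintro ⟨a, b, c⟩ hp ⟨a', b', c'⟩ hp' hpp
      obtain ⟨hpT, _⟩ := mem_filter.1 hp
      obtain ⟨hpT', _⟩ := mem_filter.1 hp'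
      have e1 : a = a' := congrArg Prod.fst hpp
      have e2 : c = c' := congrArg Prod.snd hpp
      subst e1; subst e2
      have hb : b = b' := hmid a b b' c (mem_filter.1 hpT).2 (mem_filter.1 hpT').2
      rw [hb]
  -- lower bound on Nf via the cut lemma
  have hNlow : 2 * (n - 1) ≤ Nf.card := by
    rcases s.eq_empty_or_nonempty with hse | hse
    · simp [hn, hse]
    have hNf2 : Nf = (s ×ˢ s).filter
        (fun p => p.1 ≠ p.2 ∧ ¬ ∃ b ∈ s, IsAP3 p.1 b p.2) := by
      rw [hNf, hOD, Finset.filter_filter]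
    rw [hNf2]
    apply cut_card s (fun a c => a ≠ c ∧ ¬ ∃ b ∈ s, IsAP3 a b c) hse
    · rintro a c ⟨hne, hnex⟩
      exact ⟨hne.symm, fun ⟨b, hbs, hb⟩ => hnex ⟨b, hbs, hb.symm'⟩⟩
    · intro B hBs hBne hBneq
      have hdiff : (s \ B).Nonempty := by
        rw [Finset.sdiff_nonempty]
        intro hsB
        exact hBneq (Finset.Subset.antisymm hBs hsB)
      have hX : (B ×ˢ (s \ B)).Nonempty := hBne.product hdiff
      obtain ⟨⟨a, c⟩, hpX, hmin⟩ :=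
        Finset.exists_min_image (B ×ˢ (s \ B)) (fun p => dist p.1 p.2) hX
      obtain ⟨haB, hcd⟩ := mem_product.1 hpX
      obtain ⟨hcs, hcB⟩ := mem_sdiff.1 hcd
      have hne : a ≠ c := fun h => hcB (h ▸ haB)
      have hd : (0:ℝ) < dist a c := dist_pos.2 hne
      refine ⟨a, haB, c, hcs, hcB, hne, ?_⟩
      rintro ⟨b, hbs, hab1, hab2⟩
      have h1 : dist a b = dist a c / 2 := hab1.trans hab2
      by_cases hbB : b ∈ B
      · have hle := hmin (b, c) (mem_product.2 ⟨hbB, hcd⟩)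
        simp only at hle
        rw [hab2] at hle
        linarith
      · have hle := hmin (a, b) (mem_product.2 ⟨haB, mem_sdiff.2 ⟨hbs, hbB⟩⟩)
        simp only at hle
        rw [h1] at hle
        linarith
  -- final arithmetic
  have hfin : T.card ≤ n + Pf.card := hTD.trans (by omega)
  have hnn : n ≤ n * n := by
    rcases Nat.eq_zero_or_pos n with h | h
    · simp [h]
    · exact Nat.le_mul_of_pos_left n h
  rw [pow_two]
  omega

namespace Hedgehog

noncomputable def f (i : ℕ) : Hedgehog := mk (i + 1) 1

lemma o_eq : o = mk 0 0 := (mk_zero 0).symm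

lemma dist_fo (i : ℕ) : dist (f i) o = 1 := by
  rw [f, o_eq, dist_mk (i+1) 0 zero_le_one le_rfl, if_neg (Nat.succ_ne_zero i)]
  norm_num

lemma dist_of (i : ℕ) : dist o (f i) = 1 := by
  rw [dist_comm, dist_fo]

lemma dist_ff {i j : ℕ} (h : i ≠ j) : dist (f i) (f j) = 2 := by
  rw [f, f, dist_mk (i+1) (j+1) zero_le_one zero_le_one,
    if_neg (fun hh => h (Nat.succ_injective hh))]
  norm_num

lemma f_ne_o (i : ℕ) : f i ≠ o := by
  intro h
  have := dist_fo i
  rw [h, dist_self] at this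
  norm_num at this

lemma f_inj : Function.Injective f := by
  intro i j h
  by_contra hne
  have := dist_ff hne
  rw [h, dist_self] at this
  norm_num at this

/-- The optimal configuration: origin plus `m` unit points on distinct branches. -/
lemma lower_bound (n : ℕ) (hn : 0 < n) :
    ∃ A : Set Hedgehog, A.Finite ∧ A.ncard = n ∧ (AT A).ncard = n ^ 2 + 2 - 2 * n := by
  classical
  obtain ⟨m, rfl⟩ : ∃ m, n = m + 1 := ⟨n - 1, by omega⟩
  set s : Finset Hedgehog := insert o ((Finset.range m).image f) with hs
  have honi : o ∉ (Finset.range m).image f := by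
    intro h
    obtain ⟨i, _, hi⟩ := Finset.mem_image.1 h
    exact f_ne_o i hi
  have hscard : s.card = m + 1 := by
    rw [hs, Finset.card_insert_of_notMem honi,
      Finset.card_image_of_injective _ f_inj, Finset.card_range]
  have hmem : ∀ x, x ∈ s ↔ x = o ∨ ∃ i, i < m ∧ f i = x := by
    intro x
    simp [hs, Finset.mem_insert, Finset.mem_image, Finset.mem_range]
  refine ⟨↑s, s.finite_toSet, by rw [Set.ncard_coe_finset, hscard], ?_⟩
  set Tn : Finset (Hedgehog × Hedgehog × Hedgehog) :=
    (s.image fun x => (x, x, x)) ∪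
      ((Finset.range m).offDiag.image fun q => (f q.1, o, f q.2)) with hTn
  have hAT : AT (↑s : Set Hedgehog) = ↑Tn := by
    rw [hTn]
    ext ⟨a, b, c⟩
    simp only [AT, Set.mem_setOf_eq, Finset.coe_union, Set.mem_union, Finset.coe_image,
      Set.mem_image, Finset.mem_coe, Finset.mem_offDiag, Finset.mem_range]
    constructor
    · rintro ⟨ha, hb, hc, hap⟩
      rw [hmem] at ha hb hc
      obtain ⟨h1, h2⟩ := hap
      rcases hb with rfl | ⟨j, hj, rfl⟩
      · -- middle is the origin
        rcases ha with rfl | ⟨i, hi, rfl⟩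
        · rcases hc with rfl | ⟨l, hl, rfl⟩
          · exact Or.inl ⟨o, Finset.mem_insert_self _ _, rfl⟩

          · rw [dist_self, dist_of] at h1
            norm_num at h1
        · rcases hc with rfl | ⟨l, hl, rfl⟩
          · rw [dist_fo, dist_self] at h1
            norm_num at h1
          · have hil : i ≠ l := by
              intro h
              subst h
              rw [dist_of, dist_self] at h2
              norm_num at h2
            refine Or.inr ⟨(i, l), ⟨hi, hl, hil⟩, rfl⟩
      · -- middle is f j
        rcases ha with rfl | ⟨i, hi, rfl⟩
        · rw [dist_of] at h1
          rcases hc with rfl | ⟨l, hl, rfl⟩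
          · rw [dist_fo] at h1 h2
            rw [dist_self] at h2
            norm_num at h2
          · rcases eq_or_ne j l with rfl | hjl
            · rw [dist_self] at h1
              norm_num at h1
            · rw [dist_ff hjl] at h1
              norm_num at h1
        · rcases eq_or_ne i j with rfl | hij
          · -- a = b; forces c = a, diagonal
            rw [dist_self] at h1
            have hc' : c = f i := by
              have h0 : dist (f i) c = 0 := by linarith
              exact (dist_eq_zero.1 h0).symm
            subst hc'
            exact Or.inl ⟨f i, by rw [hmem]; exact Or.inr ⟨i, hi, rfl⟩, rfl⟩
          · rw [dist_ff hij] at h1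
            rcases hc with rfl | ⟨l, hl, rfl⟩
            · rw [dist_fo] at h1
              norm_num at h1
            · rcases eq_or_ne j l with rfl | hjl
              · rw [dist_self] at h1
                norm_num at h1
              · rw [dist_ff hjl] at h2
                rcases eq_or_ne i l with rfl | hil
                · rw [dist_self] at h2
                  norm_num at h2
                · rw [dist_ff hil] at h2
                  norm_num at h2
    · rintro (⟨x, hx, hxe⟩ | ⟨⟨i, j⟩, ⟨hi, hj, hij⟩, he⟩)
      · obtain ⟨e1, e2, e3⟩ : x = a ∧ x = b ∧ x = c := by
          refine ⟨congrArg Prod.fst hxe, ?_, ?_⟩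
          · exact congrArg (fun p => p.2.1) hxe
          · exact congrArg (fun p => p.2.2) hxe
        subst e1; subst e2; subst e3
        exact ⟨Finset.mem_coe.2 hx, Finset.mem_coe.2 hx, Finset.mem_coe.2 hx,
          by simp [IsAP3, dist_self]⟩
      · obtain ⟨e1, e2, e3⟩ : f i = a ∧ o = b ∧ f j = c := by
          refine ⟨congrArg Prod.fst he, ?_, ?_⟩
          · exact congrArg (fun p => p.2.1) he
          · exact congrArg (fun p => p.2.2) he
        subst e1; subst e2; subst e3
        refine ⟨?_, ?_, ?_, ?_⟩
        · exact (hmem _).2 (Or.inr ⟨i, hi, rfl⟩)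
        · exact (hmem _).2 (Or.inl rfl)
        · exact (hmem _).2 (Or.inr ⟨j, hj, rfl⟩)
        · refine ⟨?_, ?_⟩
          · rw [dist_fo, dist_of]
          · rw [dist_of, dist_ff hij]
            norm_num
  rw [hAT, Set.ncard_coe_finset]
  have hdis : Disjoint (s.image fun x => (x, x, x))
      ((Finset.range m).offDiag.image fun q => (f q.1, o, f q.2)) := by
    rw [Finset.disjoint_left]
    rintro p hp1 hp2
    obtain ⟨x, _, hxe⟩ := Finset.mem_image.1 hp1
    obtain ⟨q, hq, hqe⟩ := Finset.mem_image.1 hp2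
    rw [← hqe] at hxe
    have e1 : x = f q.1 := congrArg Prod.fst hxe
    have e2 : x = o := congrArg (fun p => p.2.1) hxe
    exact f_ne_o q.1 (e1 ▸ e2)
  have hinj3 : Function.Injective (fun x : Hedgehog => (x, x, x)) :=
    fun a b h => congrArg Prod.fst h
  have hcard1 : (s.image fun x => (x, x, x)).card = m + 1 := by
    rw [Finset.card_image_of_injective _ hinj3, hscard]
  have hcard2 : ((Finset.range m).offDiag.image fun q => (f q.1, o, f q.2)).card
      = m * m - m := by
    rw [Finset.card_image_of_injOn, Finset.offDiag_card, Finset.card_range]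
    rintro ⟨i, j⟩ _ ⟨i', j'⟩ _ he
    have e1 : f i = f i' := congrArg Prod.fst he
    have e2 : f j = f j' := congrArg (fun p => p.2.2) he
    rw [Prod.mk.injEq]
    exact ⟨f_inj e1, f_inj e2⟩
  rw [hTn, Finset.card_union_of_disjoint hdis, hcard1, hcard2]
  have hsq : (m + 1) ^ 2 = m * m + 2 * m + 1 := by ring
  have hmm : m ≤ m * m := by
    rcases Nat.eq_zero_or_pos m with h | h
    · simp [h]
    · exact Nat.le_mul_of_pos_left m h
  omega

end Hedgehog

/-- There is a uniquely geodesic metric space `M₀` with `μ_n(M₀) = n² − 2n + 2`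
for every positive integer `n`. -/
theorem exists_uniquely_geodesic_mu_eq :
    ∃ (M₀ : Type) (_ : MetricSpace M₀), UniquelyGeodesic M₀ ∧
      ∀ n : ℕ, 0 < n →
        IsGreatest {k : ℕ | ∃ A : Set M₀, A.Finite ∧ A.ncard = n ∧ (AT A).ncard = k}
          (n ^ 2 + 2 - 2 * n) := by
  refine ⟨Hedgehog, inferInstance, Hedgehog.uniquely_geodesic, ?_⟩
  intro n hn
  constructor
  · obtain ⟨A, hfin, hcard, hAT⟩ := Hedgehog.lower_bound n hn
    exact ⟨A, hfin, hcard, hAT⟩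
  · rintro k ⟨A, hfin, hcard, hk⟩
    rw [← hk, ← hcard]
    exact AT_ncard_le (fun a b b' c h h' => Hedgehog.mid_unique h h') A hfin
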